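/- Lattice-cone lower bound for Laurent polynomials with positive coefficients: let m ≥ 1, k ≥ 1 and a₁,…,a_k ∈ ℤ^m be such that {Σ_{i=1}^k λ_i·a_i − μ : λ_i ≥ 0, μ ∈ [0,∞)^m} = ℝ^m. Then (a) there exist natural numbers n₁,…,n_k such that the vector v = Σ_i n_i·a_i has all coordinates ≥ 1; and (b) for any integers c_i ≥ 1, setting L(t) = Σ_{i=1}^k c_i·Π_{j=1}^m t_j^{−a_{i,j}} and N = Σ_i n_i, one has L(t)^N ≥ Π_{j=1}^m t_j^{−v_j} for all t ∈ (0,∞)^m; in particular there exist positive rationals ν₁,…,ν_m with L(t) ≥ Π_{j=1}^m t_j^{−ν_j} for all t ∈ (0,∞)^m. -/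

import Mathlib

private lemma zpow_sum_aux {ι : Type*} (x : ℝ) (hx : x ≠ 0) (s : Finset ι) (f : ι → ℤ) :
    x ^ (∑ i ∈ s, f i) = ∏ i ∈ s, x ^ f i := by
  classical
  induction s using Finset.induction_on with
  | empty => simp
  | insert _ _ hi ih => rw [Finset.sum_insert hi, Finset.prod_insert hi, zpow_add₀ hx, ih]

/-- Lattice-cone lower bound for Laurent polynomials with positive coefficients. -/
theorem laurent_lattice_cone_bound (m k : ℕ) (hm : 1 ≤ m) (hk : 1 ≤ k)
    (a : Fin k → Fin m → ℤ)
    (hcone : ∀ v : Fin m → ℝ, ∃ (lam : Fin k → ℝ) (mu : Fin m → ℝ),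
      (∀ i, 0 ≤ lam i) ∧ (∀ j, 0 ≤ mu j) ∧
      ∀ j, v j = (∑ i, lam i * (a i j : ℝ)) - mu j)
    (c : Fin k → ℤ) (hc : ∀ i, 1 ≤ c i) :
    ∃ n : Fin k → ℕ,
      (∀ j, 1 ≤ ∑ i, (n i : ℤ) * a i j) ∧
      (∀ t : Fin m → ℝ, (∀ j, 0 < t j) →
        (∑ i, (c i : ℝ) * ∏ j, t j ^ (-(a i j))) ^ (∑ i, n i) ≥
          ∏ j, t j ^ (-(∑ i, (n i : ℤ) * a i j))) ∧
      ∃ ν : Fin m → ℚ, (∀ j, 0 < ν j) ∧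
        ∀ t : Fin m → ℝ, (∀ j, 0 < t j) →
          (∑ i, (c i : ℝ) * ∏ j, t j ^ (-(a i j))) ≥ ∏ j, t j ^ (-(ν j : ℝ)) := by
  classical
  obtain ⟨lam, mu, hlam, hmu, hv⟩ := hcone (fun _ => 2)
  set A : ℕ := Finset.univ.sup fun i : Fin k => Finset.univ.sup fun j : Fin m => (a i j).natAbs
    with hA
  set D : ℕ := k * A + 1 with hD
  set n : Fin k → ℕ := fun i => ⌈lam i * D⌉₊ with hn
  have habs : ∀ i j, |(a i j : ℝ)| ≤ (A : ℝ) := by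
    intro i j
    have h1 : (a i j).natAbs ≤ A := by
      refine le_trans ?_ (Finset.le_sup (f := fun i : Fin k => Finset.univ.sup
        fun j : Fin m => (a i j).natAbs) (Finset.mem_univ i))
      exact Finset.le_sup (f := fun j : Fin m => (a i j).natAbs) (Finset.mem_univ j)
    calc |(a i j : ℝ)| = ((a i j).natAbs : ℝ) := by
          rw [Nat.cast_natAbs, Int.cast_abs]
      _ ≤ (A : ℝ) := by exact_mod_cast h1
  -- the key real estimate
  have key : ∀ j, (2 : ℝ) ≤ ∑ i, (n i : ℝ) * (a i j : ℝ) := by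
    intro j
    have hterm : ∀ i ∈ Finset.univ, lam i * D * a i j - (A : ℝ) ≤ (n i : ℝ) * a i j := by
      intro i _
      have hx : (0 : ℝ) ≤ lam i * (D : ℝ) := mul_nonneg (hlam i) (by positivity)
      have h1 : lam i * (D : ℝ) ≤ (n i : ℝ) := Nat.le_ceil _
      have h2 : ((n i : ℝ)) < lam i * (D : ℝ) + 1 := Nat.ceil_lt_add_one hx
      have h4 := abs_le.mp (habs i j)
      rcases le_or_gt 0 ((a i j : ℝ)) with h | h
      · nlinarith [h4.1, h4.2]
      · nlinarith [h4.1, h4.2]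
    have hsum := Finset.sum_le_sum hterm
    have hS : ∑ i, lam i * (a i j : ℝ) = 2 + mu j := by
      have := hv j
      linarith
    have hE : ∑ i, (lam i * (D : ℝ) * a i j - (A : ℝ))
        = (D : ℝ) * (2 + mu j) - (k : ℝ) * A := by
      rw [Finset.sum_sub_distrib, Finset.sum_const, Finset.card_univ, Fintype.card_fin,
        nsmul_eq_mul, ← hS, Finset.mul_sum]
      congr 1
      apply Finset.sum_congr rfl
      intro i _
      ring
    have hDval : (D : ℝ) = (k : ℝ) * A + 1 := by
      rw [hD]; push_cast; ring
    have hmuj := hmu j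
    have hAk : (0 : ℝ) ≤ (k : ℝ) * A := by positivity
    have hDmu : (0 : ℝ) ≤ (D : ℝ) * mu j := mul_nonneg (by positivity) hmuj
    have hexp : (D : ℝ) * (2 + mu j) = 2 * D + D * mu j := by ring
    linarith [hsum, hE, hexp, hDmu, hDval, hAk]
  -- part (a)
  have parta : ∀ j, 1 ≤ ∑ i, (n i : ℤ) * a i j := by
    intro j
    have h2 : (1 : ℝ) ≤ ((∑ i, (n i : ℤ) * a i j : ℤ) : ℝ) := by
      push_cast
      linarith [key j]
    exact_mod_cast h2
  -- part (b)
  have partb : ∀ t : Fin m → ℝ, (∀ j, 0 < t j) →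
      (∑ i, (c i : ℝ) * ∏ j, t j ^ (-(a i j))) ^ (∑ i, n i) ≥
        ∏ j, t j ^ (-(∑ i, (n i : ℤ) * a i j)) := by
    intro t ht
    set P : Fin k → ℝ := fun i => ∏ j, t j ^ (-(a i j)) with hP
    have hP0 : ∀ i, 0 < P i := fun i =>
      Finset.prod_pos fun j _ => zpow_pos (ht j) _
    set S : ℝ := ∑ i, P i with hSdef
    have hS0 : 0 ≤ S := Finset.sum_nonneg fun i _ => (hP0 i).le
    have hSP : ∀ i, P i ≤ S :=
      fun i => Finset.single_le_sum (fun i _ => (hP0 i).le) (Finset.mem_univ i)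
    have hSL : S ≤ ∑ i, (c i : ℝ) * P i := by
      apply Finset.sum_le_sum
      intro i _
      have : (1 : ℝ) ≤ (c i : ℝ) := by exact_mod_cast hc i
      nlinarith [hP0 i]
    have hprod : ∏ j, t j ^ (-(∑ i, (n i : ℤ) * a i j)) = ∏ i, P i ^ (n i) := by
      have : ∀ i, P i ^ (n i) = ∏ j, t j ^ ((-(a i j)) * (n i : ℤ)) := by
        intro i
        rw [hP, ← Finset.prod_pow]
        apply Finset.prod_congr rfl
        intro j _
        rw [← zpow_natCast (t j ^ (-(a i j))) (n i), ← zpow_mul]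
      rw [Finset.prod_congr rfl fun i _ => this i, Finset.prod_comm]
      apply Finset.prod_congr rfl
      intro j _
      rw [← zpow_sum_aux (t j) (ht j).ne' Finset.univ]
      congr 1
      rw [← Finset.sum_neg_distrib]
      apply Finset.sum_congr rfl
      intro i _
      ring
    rw [ge_iff_le, hprod]
    calc ∏ i, P i ^ (n i) ≤ ∏ i, S ^ (n i) := by
          apply Finset.prod_le_prod
          · intro i _; exact pow_nonneg (hP0 i).le _
          · intro i _; exact pow_le_pow_left₀ (hP0 i).le (hSP i) _
      _ = S ^ (∑ i, n i) := by rw [← Finset.prod_pow_eq_pow_sum]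
      _ ≤ (∑ i, (c i : ℝ) * P i) ^ (∑ i, n i) := pow_le_pow_left₀ hS0 hSL _
  -- N positive
  set N : ℕ := ∑ i, n i with hN
  have hN0 : N ≠ 0 := by
    intro h0
    have hj : (⟨0, hm⟩ : Fin m) = ⟨0, hm⟩ := rfl
    have h1 := parta ⟨0, hm⟩
    have : ∀ i, n i = 0 := by
      intro i
      have := (Finset.sum_eq_zero_iff_of_nonneg (fun i _ => Nat.zero_le _)).mp h0 i
        (Finset.mem_univ i)
      exact this
    simp [this] at h1
  refine ⟨n, parta, partb, fun j => ((∑ i, (n i : ℤ) * a i j : ℤ) : ℚ) / (N : ℚ), ?_, ?_⟩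
  · intro j
    apply div_pos
    · exact_mod_cast lt_of_lt_of_le zero_lt_one (parta j)
    · exact_mod_cast Nat.pos_of_ne_zero hN0
  · intro t ht
    set L : ℝ := ∑ i, (c i : ℝ) * ∏ j, t j ^ (-(a i j)) with hL
    have hL0 : 0 < L := by
      apply Finset.sum_pos
      · intro i _
        have hci : (0 : ℝ) < (c i : ℝ) := by exact_mod_cast lt_of_lt_of_le zero_lt_one (hc i)
        exact mul_pos hci (Finset.prod_pos fun j _ => zpow_pos (ht j) _)
      · have : Nonempty (Fin k) := Fin.pos_iff_nonempty.mp hk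
        exact Finset.univ_nonempty
    set R : ℝ := ∏ j, t j ^
      (-((((∑ i, (n i : ℤ) * a i j : ℤ) : ℚ) / (N : ℚ) : ℚ) : ℝ)) with hR
    have hR0 : 0 < R := Finset.prod_pos fun j _ => Real.rpow_pos_of_pos (ht j) _
    rw [ge_iff_le]
    apply le_of_pow_le_pow_left₀ hN0 hL0.le
    have hRN : R ^ N = ∏ j, t j ^ (-(∑ i, (n i : ℤ) * a i j)) := by
      rw [hR, ← Finset.prod_pow]
      apply Finset.prod_congr rfl
      intro j _
      rw [← Real.rpow_natCast (t j ^ _) N, ← Real.rpow_mul (ht j).le]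
      rw [show (-((((∑ i, (n i : ℤ) * a i j : ℤ) : ℚ) / (N : ℚ) : ℚ) : ℝ)) * (N : ℝ)
          = ((-(∑ i, (n i : ℤ) * a i j) : ℤ) : ℝ) by
        push_cast
        field_simp]
      rw [Real.rpow_intCast]
    rw [hRN]
    exact partb t ht
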